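/- Let f: X₁ × ⋯ × X_m → ℝ be continuous, where each Xᵢ is a compact metric space. Define the set-valued map M sending Θ = (Θ₁,…,Θ_m) to the set of O = (O₁,…,O_m) obtained by the cyclic updates Oᵢ ∈ argmax_{X ∈ Xᵢ} f(O₁,…,O_{i−1}, X, Θ_{i+1},…,Θ_m). Then M is a closed map: if Θ^k → Θ, O^k → O, and O^k ∈ M(Θ^k) for all k, then O ∈ M(Θ). -/
import Mathlib


open Filter Topology

variable {m : ℕ} {X : Fin m → Type*}

/-- The hybrid point used in the cyclic update: coordinates `j ≤ i` come from `O`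
(already updated), coordinates `j > i` come from `Θ` (not yet updated). -/
def hybrid (O Θ : ∀ j, X j) (i : Fin m) : ∀ j, X j :=
  fun j => if (j : ℕ) ≤ (i : ℕ) then O j else Θ j

/-- `O ∈ M(Θ)`: each block `Oᵢ` maximizes `f` in its coordinate, with blocks `j < i`
already set to `O j` and blocks `j > i` still at `Θ j`. -/
def InCyclicUpdate (f : (∀ j, X j) → ℝ) (Θ O : ∀ j, X j) : Prop :=
  ∀ i : Fin m, ∀ Y : X i,
    f (Function.update (hybrid O Θ i) i Y) ≤ f (hybrid O Θ i)

/-- The set-valued cyclic block-maximization map `M` is closed: if `Θ^k → Θ`, `O^k → O`,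
and `O^k ∈ M(Θ^k)` for all `k`, then `O ∈ M(Θ)`. -/
theorem cyclic_update_map_closed
    [∀ i, MetricSpace (X i)] [∀ i, CompactSpace (X i)]
    (f : (∀ j, X j) → ℝ) (hf : Continuous f)
    (Θseq Oseq : ℕ → ∀ j, X j) (Θ O : ∀ j, X j)
    (hΘ : Tendsto Θseq atTop (𝓝 Θ)) (hO : Tendsto Oseq atTop (𝓝 O))
    (hmem : ∀ k, InCyclicUpdate f (Θseq k) (Oseq k)) :
    InCyclicUpdate f Θ O := by
  intro i Y
  have hhyb : Tendsto (fun k => hybrid (Oseq k) (Θseq k) i) atTop (𝓝 (hybrid O Θ i)) := by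
    rw [tendsto_pi_nhds]
    intro j
    unfold hybrid
    by_cases h : (j : ℕ) ≤ (i : ℕ)
    · simp only [h, if_true]
      exact (tendsto_pi_nhds.mp hO) j
    · simp only [h, if_false]
      exact (tendsto_pi_nhds.mp hΘ) j
  have hupd : Tendsto (fun k => Function.update (hybrid (Oseq k) (Θseq k) i) i Y) atTop
      (𝓝 (Function.update (hybrid O Θ i) i Y)) := by
    rw [tendsto_pi_nhds]
    intro j
    rcases eq_or_ne j i with rfl | h
    · simp only [Function.update_self]
      exact tendsto_const_nhds
    · simp only [Function.update_of_ne h]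
      exact (tendsto_pi_nhds.mp hhyb) j
  exact le_of_tendsto_of_tendsto ((hf.tendsto _).comp hupd) ((hf.tendsto _).comp hhyb)
    (Filter.Eventually.of_forall fun k => hmem k i Y)
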